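/- arXiv:1107.3500 — 5 statements merged into one kernel-verified Lean document; each statement's English description precedes it below -/
import Mathlib

section
/- Let 0 ≤ κ₀ ≤ 1 and 0 ≤ κ₁ ≤ 1 with κ₀ ≠ κ₁, and define γ = (√κ₀ − √κ₁)², ω = (κ₀ + κ₁ + 2)/2 − 2√(κ₀κ₁) − √((1−κ₀)(1−κ₁)), and the threshold energy n_th = 2·ln 2 / (2 − κ₀ − κ₁ − 2√((1−κ₀)(1−κ₁))). Then for every real n > n_th one has e^{−ωn}/2 < (1 − √(1 − e^{−γn}))/2; that is, above the threshold energy the quantum Bhattacharyya bound is strictly smaller than the classical discrimination bound. -/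
open Real

lemma stmt1_aux (x y : ℝ) (hx1 : x < 1) (hypos : 0 < y) (hyx : y < x / 2) :
    y / 2 < (1 - Real.sqrt (1 - x)) / 2 := by
  have hy1 : 0 < 1 - y := by linarith
  have key : Real.sqrt (1 - x) < 1 - y := by
    rw [Real.sqrt_lt' hy1]
    nlinarith [sq_nonneg y]
  linarith

/-- Above the threshold energy `n_th`, the quantum Bhattacharyya bound `e^{−ωn}/2`
for the EPR transmitter is strictly smaller than the classical discrimination bound
`(1 − √(1 − e^{−γn}))/2`. -/
theorem stmt1 (κ₀ κ₁ : ℝ) (h₀ : 0 ≤ κ₀) (h₀' : κ₀ ≤ 1) (h₁ : 0 ≤ κ₁) (h₁' : κ₁ ≤ 1)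
    (hne : κ₀ ≠ κ₁)
    (γ ω nth : ℝ)
    (hγ : γ = (Real.sqrt κ₀ - Real.sqrt κ₁) ^ 2)
    (hω : ω = (κ₀ + κ₁ + 2) / 2 - 2 * Real.sqrt (κ₀ * κ₁)
        - Real.sqrt ((1 - κ₀) * (1 - κ₁)))
    (hnth : nth = 2 * Real.log 2
        / (2 - κ₀ - κ₁ - 2 * Real.sqrt ((1 - κ₀) * (1 - κ₁)))) :
    ∀ n : ℝ, n > nth →
      Real.exp (-(ω * n)) / 2 < (1 - Real.sqrt (1 - Real.exp (-(γ * n)))) / 2 := by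
  intro n hn
  have h10 : (0:ℝ) ≤ 1 - κ₀ := by linarith
  have h11 : (0:ℝ) ≤ 1 - κ₁ := by linarith
  have e0 : Real.sqrt (1 - κ₀) ^ 2 = 1 - κ₀ := Real.sq_sqrt h10
  have e1 : Real.sqrt (1 - κ₁) ^ 2 = 1 - κ₁ := Real.sq_sqrt h11
  have f0 : Real.sqrt κ₀ ^ 2 = κ₀ := Real.sq_sqrt h₀
  have f1 : Real.sqrt κ₁ ^ 2 = κ₁ := Real.sq_sqrt h₁
  have hm : Real.sqrt ((1 - κ₀) * (1 - κ₁)) = Real.sqrt (1 - κ₀) * Real.sqrt (1 - κ₁) :=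
    Real.sqrt_mul h10 _
  have hm' : Real.sqrt (κ₀ * κ₁) = Real.sqrt κ₀ * Real.sqrt κ₁ := Real.sqrt_mul h₀ _
  set D : ℝ := (Real.sqrt (1 - κ₀) - Real.sqrt (1 - κ₁)) ^ 2 with hDdef
  have hD : D = 2 - κ₀ - κ₁ - 2 * Real.sqrt ((1 - κ₀) * (1 - κ₁)) := by
    rw [hDdef]; linear_combination e0 + e1 + 2 * hm
  have hsne : Real.sqrt (1 - κ₀) ≠ Real.sqrt (1 - κ₁) := by
    intro h
    apply hne
    have : 1 - κ₀ = 1 - κ₁ := by rw [← e0, ← e1, h]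
    linarith
  have hDpos : 0 < D := by
    have h2 : Real.sqrt (1 - κ₀) - Real.sqrt (1 - κ₁) ≠ 0 := sub_ne_zero.mpr hsne
    positivity
  have hsne' : Real.sqrt κ₀ ≠ Real.sqrt κ₁ := by
    intro h
    apply hne
    rw [← f0, ← f1, h]
  have hγpos : 0 < γ := by
    rw [hγ]
    have h2 : Real.sqrt κ₀ - Real.sqrt κ₁ ≠ 0 := sub_ne_zero.mpr hsne'
    positivity
  have hωγ : ω = γ + D / 2 := by
    rw [hω, hγ, hD]; linear_combination -f0 - f1 - 2 * hm'
  have hnth' : nth = 2 * Real.log 2 / D := by rw [hnth, hD]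
  have hlog2 : 0 < Real.log 2 := Real.log_pos (by norm_num)
  have hnthpos : 0 < nth := by rw [hnth']; positivity
  have hnpos : 0 < n := lt_trans hnthpos hn
  have hDn : 2 * Real.log 2 < D * n := by
    rw [hnth'] at hn
    have h2 := (div_lt_iff₀ hDpos).mp hn
    linarith [h2, mul_comm n D]
  have hhalf : Real.exp (-(D / 2 * n)) < 1 / 2 := by
    have h3 : -(D / 2 * n) < -Real.log 2 := by linarith
    calc Real.exp (-(D / 2 * n)) < Real.exp (-Real.log 2) := Real.exp_lt_exp.mpr h3
      _ = 1 / 2 := by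
        rw [Real.exp_neg, Real.exp_log (by norm_num : (0:ℝ) < 2)]
        norm_num
  have hxpos : 0 < Real.exp (-(γ * n)) := Real.exp_pos _
  have hx1 : Real.exp (-(γ * n)) < 1 := by
    rw [Real.exp_lt_one_iff]
    nlinarith
  have hy : Real.exp (-(ω * n)) = Real.exp (-(γ * n)) * Real.exp (-(D / 2 * n)) := by
    rw [← Real.exp_add]
    congr 1
    rw [hωγ]; ring
  have hyx : Real.exp (-(ω * n)) < Real.exp (-(γ * n)) / 2 := by
    rw [hy]
    nlinarith
  exact stmt1_aux _ _ hx1 (Real.exp_pos _) hyx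
end

section
/- Let 0 ≤ κ₀ < 1 (ideal memory, i.e. κ₁ = 1) and set a = 1 − √κ₀ ∈ (0,1]. Then for every real n > 1/2 one has e^{−2na}/2 < (1 − √(1 − e^{−na²}))/2; equivalently, 2·e^{−2na} − e^{−4na} < e^{−na²}. That is, for ideal memories the improved quantum bound θ = e^{−2n(1−√κ₀)}/2 beats the classical discrimination bound whenever the signal energy exceeds the threshold n_th = 1/2. -/
open Real

lemma exp_lb_pos (y : ℝ) (hy : 0 ≤ y) : 1 + y + y^2/2 + y^3/6 ≤ Real.exp y := by
  have h := Real.sum_le_exp_of_nonneg hy 4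
  simp [Finset.sum_range_succ, Nat.factorial] at h
  linarith

lemma exp_lb_neg (t : ℝ) (h0 : 0 ≤ t) (h1 : t ≤ 1/2) :
    1 - 2*t + 2*t^2 - (4/3)*t^3 + (2/3)*t^4 - (8/25)*t^5 ≤ Real.exp (-(2*t)) := by
  have habs : |(-(2*t))| ≤ 1 := by rw [abs_neg, abs_of_nonneg (by linarith)]; linarith
  have h := Real.exp_bound habs (n := 5) (by norm_num)
  rw [abs_neg, abs_of_nonneg (by linarith : (0:ℝ) ≤ 2*t)] at h
  simp [Finset.sum_range_succ, Nat.factorial] at h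
  rw [abs_le] at h
  nlinarith [h.1, h.2]

-- hard case: for 0 ≤ t ≤ 1/2, 2 e^{-2t} ≤ e^{-2t²} + e^{-4t}
lemma g_lem (t : ℝ) (h0 : 0 ≤ t) (h1 : t ≤ 1/2) :
    2 * Real.exp (-(2*t)) ≤ Real.exp (-(2*t*t)) + Real.exp (-(4*t)) := by
  have e1 : Real.exp (-(2*t*t)) = Real.exp (-(2*t)) * Real.exp (2*t - 2*t*t) := by
    rw [← Real.exp_add]; ring_nf
  have e2 : Real.exp (-(4*t)) = Real.exp (-(2*t)) * Real.exp (-(2*t)) := by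
    rw [← Real.exp_add]; ring_nf
  rw [e1, e2]
  have hp := Real.exp_pos (-(2*t))
  have hy : (0:ℝ) ≤ 2*t - 2*t*t := by nlinarith
  have hb1 := exp_lb_pos (2*t - 2*t*t) hy
  have hb2 := exp_lb_neg t h0 h1
  have key : (2:ℝ) ≤ Real.exp (2*t - 2*t*t) + Real.exp (-(2*t)) := by
    nlinarith [mul_nonneg (mul_nonneg (mul_nonneg h0 h0) h0) (sub_nonneg.2 h1),
      mul_nonneg (mul_nonneg (mul_nonneg (mul_nonneg h0 h0) h0) h0) (sub_nonneg.2 h1),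
      mul_nonneg (mul_nonneg (mul_nonneg (mul_nonneg (mul_nonneg h0 h0) h0) h0) h0) (sub_nonneg.2 h1),
      mul_nonneg (mul_nonneg h0 h0) (mul_nonneg (sub_nonneg.2 h1) (sub_nonneg.2 h1))]
  nlinarith

lemma exp_half_lt : Real.exp (-(1/2:ℝ)) < 0.6066 := by
  have h1 : Real.exp (-(1/2:ℝ)) ^ 2 = Real.exp (-1) := by
    rw [sq, ← Real.exp_add]; norm_num
  have hmul : Real.exp (-1:ℝ) * Real.exp 1 = 1 := by rw [← Real.exp_add]; norm_num
  have h2 : Real.exp (-1:ℝ) < 0.36788 := by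
    nlinarith [Real.exp_one_gt_d9, Real.exp_pos (-1:ℝ)]
  nlinarith [Real.exp_pos (-(1/2:ℝ)), sq_nonneg (Real.exp (-(1/2:ℝ)) - 0.6066)]

lemma key_lem (a t : ℝ) (ha0 : 0 < a) (ha1 : a ≤ 1) (hat : a < 2*t) :
    2 * Real.exp (-(2*t)) - Real.exp (-(4*t)) < Real.exp (-(a*t)) := by
  have ht0 : 0 < t := by linarith
  rcases le_or_gt t (1/2) with h | h
  · have h1 : Real.exp (-(2*t*t)) < Real.exp (-(a*t)) :=
      Real.exp_lt_exp.2 (by nlinarith)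
    have h2 := g_lem t ht0.le h
    linarith
  · have h1 : Real.exp (-t) ≤ Real.exp (-(a*t)) :=
      Real.exp_le_exp.2 (by nlinarith)
    set u := Real.exp (-t) with hu
    have hupos : 0 < u := Real.exp_pos _
    have hub : u < 0.6066 := by
      calc u < Real.exp (-(1/2:ℝ)) := Real.exp_lt_exp.2 (by linarith)
        _ < 0.6066 := exp_half_lt
    have e2 : Real.exp (-(2*t)) = u * u := by rw [hu, ← Real.exp_add]; ring_nf
    have e4 : Real.exp (-(4*t)) = u * u * (u * u) := by
      rw [hu, ← Real.exp_add, ← Real.exp_add]; congr 1; ring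
    have hfac : 0 < u * (1 - u) * (1 - u - u^2) := by
      apply mul_pos (mul_pos hupos (by nlinarith))
      nlinarith
    have : 2 * (u*u) - u*u*(u*u) < u := by nlinarith [hfac]
    rw [e2, e4]; linarith

/-- For ideal memories (`κ₁ = 1`), the improved quantum bound `θ = e^{−2n(1−√κ₀)}/2`
beats the classical discrimination bound `(1 − √(1 − e^{−n(1−√κ₀)²}))/2`
whenever the signal energy exceeds `n_th = 1/2`; equivalently
`2 e^{−2na} − e^{−4na} < e^{−na²}` where `a = 1 − √κ₀`. -/
theorem stmt2 (κ₀ : ℝ) (h₀ : 0 ≤ κ₀) (h₀' : κ₀ < 1)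
    (a : ℝ) (ha : a = 1 - Real.sqrt κ₀) :
    (0 < a ∧ a ≤ 1) ∧
    ∀ n : ℝ, n > 1 / 2 →
      Real.exp (-(2 * n * a)) / 2
          < (1 - Real.sqrt (1 - Real.exp (-(n * a ^ 2)))) / 2
        ∧ 2 * Real.exp (-(2 * n * a)) - Real.exp (-(4 * n * a))
            < Real.exp (-(n * a ^ 2)) := by
  have hs0 : 0 ≤ Real.sqrt κ₀ := Real.sqrt_nonneg _
  have hs1 : Real.sqrt κ₀ < 1 := by
    rw [show (1:ℝ) = Real.sqrt 1 by simp]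
    exact Real.sqrt_lt_sqrt h₀ h₀'
  have ha0 : 0 < a := by rw [ha]; linarith
  have ha1 : a ≤ 1 := by rw [ha]; linarith
  refine ⟨⟨ha0, ha1⟩, fun n hn => ?_⟩
  have hn0 : 0 < n := by linarith
  have hkey := key_lem a (n * a) ha0 ha1 (by nlinarith)
  have main : 2 * Real.exp (-(2 * n * a)) - Real.exp (-(4 * n * a))
      < Real.exp (-(n * a ^ 2)) := by
    rw [show -(2*n*a) = -(2*(n*a)) by ring, show -(4*n*a) = -(4*(n*a)) by ring,
      show -(n*a^2) = -(a*(n*a)) by ring]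
    exact hkey
  refine ⟨?_, main⟩
  have hu1 : Real.exp (-(2 * n * a)) < 1 := by
    rw [Real.exp_lt_one_iff]; nlinarith
  have hup : 0 < Real.exp (-(2 * n * a)) := Real.exp_pos _
  have hsq : Real.sqrt (1 - Real.exp (-(n * a ^ 2))) < 1 - Real.exp (-(2 * n * a)) := by
    rw [Real.sqrt_lt' (by linarith)]
    have hsq' : Real.exp (-(4 * n * a)) = Real.exp (-(2 * n * a)) ^ 2 := by
      rw [sq, ← Real.exp_add]; congr 1; ring
    nlinarith [main]
  have hsnn : 0 ≤ Real.sqrt (1 - Real.exp (-(n * a ^ 2))) := Real.sqrt_nonneg _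
  linarith
end

section
/- Let H₂(x) = −x·log₂ x − (1−x)·log₂(1−x) (with 0·log₂ 0 = 0) denote the binary Shannon entropy. Fix p ∈ [0,1] and γ ≥ 0, and for n ≥ 0 define ξ(n) = 1/2 + (1/2)·√(1 − 4p(1−p)(1 − e^{−γn})). Then the function n ↦ H₂(ξ(n)) is concave on [0, ∞). -/
open Real

/-- The binary Shannon entropy `H₂(x) = −x log₂ x − (1−x)·log₂(1−x)`
(with the convention `0·log₂ 0 = 0`, automatic since `logb 2 0 = 0`). -/
noncomputable def binEnt (x : ℝ) : ℝ := -x * Real.logb 2 x - (1 - x) * Real.logb 2 (1 - x)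

namespace Stmt6Aux

lemma log2_pos : 0 < Real.log 2 := Real.log_pos one_lt_two

lemma binEnt_eq :
    binEnt = fun x => (-(x * Real.log x) - (1 - x) * Real.log (1 - x)) / Real.log 2 := by
  funext x
  rw [binEnt, ← Real.log_div_log, ← Real.log_div_log]
  ring

lemma continuous_binEnt : Continuous binEnt := by
  rw [binEnt_eq]
  exact (Real.continuous_mul_log.neg.sub
    (Real.continuous_mul_log.comp (continuous_const.sub continuous_id))).div_const _

lemma binEnt_hasDerivAt {x : ℝ} (h0 : 0 < x) (h1 : x < 1) :
    HasDerivAt binEnt ((Real.log (1 - x) - Real.log x) / Real.log 2) x := by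
  have h1' : (0:ℝ) < 1 - x := by linarith
  have ha : HasDerivAt (fun y : ℝ => y * Real.log y) (Real.log x + 1) x :=
    Real.hasDerivAt_mul_log h0.ne'
  have hb : HasDerivAt (fun y : ℝ => (1 - y) * Real.log (1 - y))
      ((Real.log (1 - x) + 1) * (-1)) x :=
    (Real.hasDerivAt_mul_log h1'.ne').comp x ((hasDerivAt_id x).const_sub 1)
  have h := (ha.neg.sub hb).div_const (Real.log 2)
  rw [binEnt_eq]
  refine h.congr_deriv ?_
  ring

lemma key_ineq {s : ℝ} (h0 : 0 < s) (h1 : s < 1) :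
    (Real.log (1 + s) - Real.log (1 - s)) * (1 - s ^ 2) ≤ 2 * s := by
  have hm : (0:ℝ) < 1 - s := by linarith
  have hp : (0:ℝ) < 1 + s := by linarith
  set x := Real.log (1 + s) - Real.log (1 - s) with hx
  have hx0 : 0 ≤ x := sub_nonneg.2 (Real.log_le_log hm (by linarith))
  have hsinh : Real.sinh x = ((1 + s) / (1 - s) - ((1 + s) / (1 - s))⁻¹) / 2 := by
    rw [Real.sinh_eq, Real.exp_neg, hx, Real.exp_sub, Real.exp_log hp, Real.exp_log hm]
  have hle : x ≤ Real.sinh x := by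
    rcases eq_or_lt_of_le hx0 with h | h
    · simp [← h]
    · exact (Real.self_lt_sinh_iff.2 h).le
  have h2 : Real.sinh x * ((1 - s) * (1 + s)) = 2 * s := by
    rw [hsinh]; field_simp; ring
  have hpos : (0:ℝ) < (1 - s) * (1 + s) := mul_pos hm hp
  nlinarith [mul_le_mul_of_nonneg_right hle hpos.le]

noncomputable def g (u : ℝ) : ℝ := binEnt (1 / 2 + 1 / 2 * Real.sqrt u)

noncomputable def g1 (u : ℝ) : ℝ :=
  (Real.log (1 - Real.sqrt u) - Real.log (1 + Real.sqrt u)) / (4 * Real.sqrt u * Real.log 2)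

noncomputable def g2 (u : ℝ) : ℝ :=
  (((1 - Real.sqrt u)⁻¹ * -(1 / (2 * Real.sqrt u)) -
        (1 + Real.sqrt u)⁻¹ * (1 / (2 * Real.sqrt u))) * (4 * Real.sqrt u * Real.log 2) -
      (Real.log (1 - Real.sqrt u) - Real.log (1 + Real.sqrt u)) *
        (4 * (1 / (2 * Real.sqrt u)) * Real.log 2)) /
    (4 * Real.sqrt u * Real.log 2) ^ 2

lemma sqrt_lt_one' {u : ℝ} (hu0 : 0 < u) (hu1 : u < 1) : Real.sqrt u < 1 := by
  have := Real.sqrt_lt_sqrt hu0.le hu1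
  simpa using this

lemma g_hasDerivAt {u : ℝ} (hu : u ∈ Set.Ioo (0:ℝ) 1) : HasDerivAt g (g1 u) u := by
  obtain ⟨hu0, hu1⟩ := hu
  have hs0 : 0 < Real.sqrt u := Real.sqrt_pos.2 hu0
  have hs1 : Real.sqrt u < 1 := sqrt_lt_one' hu0 hu1
  have hξ0 : 0 < 1 / 2 + 1 / 2 * Real.sqrt u := by linarith
  have hξ1 : 1 / 2 + 1 / 2 * Real.sqrt u < 1 := by linarith
  have hin : HasDerivAt (fun v : ℝ => 1 / 2 + 1 / 2 * Real.sqrt v)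
      (1 / 2 * (1 / (2 * Real.sqrt u))) u :=
    ((Real.hasDerivAt_sqrt hu0.ne').const_mul (1 / 2)).const_add (1 / 2)
  have h := (binEnt_hasDerivAt hξ0 hξ1).comp u hin
  have heq : g1 u = (Real.log (1 - (1 / 2 + 1 / 2 * Real.sqrt u)) -
      Real.log (1 / 2 + 1 / 2 * Real.sqrt u)) / Real.log 2 * (1 / 2 * (1 / (2 * Real.sqrt u))) := by
    rw [show 1 - (1 / 2 + 1 / 2 * Real.sqrt u) = (1 - Real.sqrt u) / 2 by ring,
        show (1 / 2 + 1 / 2 * Real.sqrt u : ℝ) = (1 + Real.sqrt u) / 2 by ring,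
        Real.log_div (by linarith) two_ne_zero, Real.log_div (by linarith) two_ne_zero, g1]
    ring
  rw [heq]
  exact h

lemma g1_hasDerivAt {u : ℝ} (hu : u ∈ Set.Ioo (0:ℝ) 1) : HasDerivAt g1 (g2 u) u := by
  obtain ⟨hu0, hu1⟩ := hu
  have hs0 : 0 < Real.sqrt u := Real.sqrt_pos.2 hu0
  have hs1 : Real.sqrt u < 1 := sqrt_lt_one' hu0 hu1
  have hsq : HasDerivAt Real.sqrt (1 / (2 * Real.sqrt u)) u := Real.hasDerivAt_sqrt hu0.ne'
  have hN : HasDerivAt (fun v => Real.log (1 - Real.sqrt v) - Real.log (1 + Real.sqrt v))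
      ((1 - Real.sqrt u)⁻¹ * -(1 / (2 * Real.sqrt u)) -
        (1 + Real.sqrt u)⁻¹ * (1 / (2 * Real.sqrt u))) u :=
    ((Real.hasDerivAt_log (by linarith)).comp u (hsq.const_sub 1)).sub
      ((Real.hasDerivAt_log (by linarith)).comp u (hsq.const_add 1))
  have hD : HasDerivAt (fun v => 4 * Real.sqrt v * Real.log 2)
      (4 * (1 / (2 * Real.sqrt u)) * Real.log 2) u := (hsq.const_mul 4).mul_const _
  exact hN.div hD (by
    have hL := log2_pos
    positivity)

lemma g2_nonpos {u : ℝ} (hu : u ∈ Set.Ioo (0:ℝ) 1) : g2 u ≤ 0 := by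
  obtain ⟨hu0, hu1⟩ := hu
  unfold g2
  set s := Real.sqrt u with hs
  have hs0 : 0 < s := Real.sqrt_pos.2 hu0
  have hs1 : s < 1 := sqrt_lt_one' hu0 hu1
  have hL := log2_pos
  have key := key_ineq hs0 hs1
  apply div_nonpos_of_nonpos_of_nonneg _ (sq_nonneg _)
  have h1 : (1:ℝ) - s ≠ 0 := by linarith
  have h2 : (1:ℝ) + s ≠ 0 := by linarith
  have h3 : (1:ℝ) - s ^ 2 ≠ 0 := by nlinarith
  have hnum : ((1 - s)⁻¹ * -(1 / (2 * s)) - (1 + s)⁻¹ * (1 / (2 * s))) * (4 * s * Real.log 2) -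
      (Real.log (1 - s) - Real.log (1 + s)) * (4 * (1 / (2 * s)) * Real.log 2) =
      (-2 * Real.log 2) * (2 * s - (Real.log (1 + s) - Real.log (1 - s)) * (1 - s ^ 2)) /
        (s * (1 - s ^ 2)) := by
    field_simp
    ring
  rw [hnum]
  apply div_nonpos_of_nonpos_of_nonneg
  · have hX : 0 ≤ 2 * s - (Real.log (1 + s) - Real.log (1 - s)) * (1 - s ^ 2) := by linarith
    nlinarith [mul_nonneg hX hL.le]
  · have h4 : (0:ℝ) < 1 - s ^ 2 := by nlinarith
    positivity

lemma continuousOn_g : ContinuousOn g (Set.Icc (0:ℝ) 1) :=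
  (continuous_binEnt.comp
    (continuous_const.add (continuous_const.mul Real.continuous_sqrt))).continuousOn

lemma g_concave : ConcaveOn ℝ (Set.Icc (0:ℝ) 1) g := by
  refine concaveOn_of_hasDerivWithinAt2_nonpos (f' := g1) (f'' := g2) (convex_Icc 0 1)
    continuousOn_g ?_ ?_ ?_ <;> rw [interior_Icc]
  · exact fun x hx => (g_hasDerivAt hx).hasDerivWithinAt
  · exact fun x hx => (g1_hasDerivAt hx).hasDerivWithinAt
  · exact fun x hx => g2_nonpos hx

lemma g_anti : AntitoneOn g (Set.Icc (0:ℝ) 1) := by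
  refine antitoneOn_of_deriv_nonpos (convex_Icc 0 1) continuousOn_g ?_ ?_ <;> rw [interior_Icc]
  · exact fun x hx => (g_hasDerivAt hx).differentiableAt.differentiableWithinAt
  · intro x hx
    rw [(g_hasDerivAt hx).deriv]
    obtain ⟨h0, h1⟩ := hx
    have hs0 : 0 < Real.sqrt x := Real.sqrt_pos.2 h0
    have hs1 : Real.sqrt x < 1 := sqrt_lt_one' h0 h1
    apply div_nonpos_of_nonpos_of_nonneg
    · have : Real.log (1 - Real.sqrt x) ≤ Real.log (1 + Real.sqrt x) :=
        Real.log_le_log (by linarith) (by linarith)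
      linarith
    · exact mul_nonneg (mul_nonneg (by norm_num) (Real.sqrt_nonneg x)) log2_pos.le

end Stmt6Aux

open Stmt6Aux in
/-- The Holevo information `H₂(ξ(n))` read per cell by the optimal coherent-state
transmitter, with `ξ(n) = 1/2 + (1/2)√(1 − 4p(1−p)(1 − e^{−γn}))`, is a concave
function of the signal energy `n` on `[0, ∞)`. -/
theorem stmt6 (p : ℝ) (hp : 0 ≤ p) (hp' : p ≤ 1) (γ : ℝ) (hγ : 0 ≤ γ) :
    ConcaveOn ℝ (Set.Ici (0 : ℝ))
      (fun n : ℝ =>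
        binEnt (1 / 2 + (1 / 2) *
          Real.sqrt (1 - 4 * p * (1 - p) * (1 - Real.exp (-(γ * n)))))) := by
  have hq0 : 0 ≤ 4 * p * (1 - p) := by nlinarith
  have hq1 : 4 * p * (1 - p) ≤ 1 := by nlinarith [sq_nonneg (2 * p - 1)]
  have hmem : ∀ n : ℝ, 0 ≤ n →
      (1 - 4 * p * (1 - p) * (1 - Real.exp (-(γ * n)))) ∈ Set.Icc (0:ℝ) 1 := by
    intro n hn
    have hE1 : Real.exp (-(γ * n)) ≤ 1 := Real.exp_le_one_iff.2 (by nlinarith)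
    have hE0 : 0 < Real.exp (-(γ * n)) := Real.exp_pos _
    constructor
    · nlinarith [mul_nonneg hq0 hE0.le]
    · nlinarith [mul_nonneg hq0 (by linarith : (0:ℝ) ≤ 1 - Real.exp (-(γ * n)))]
  refine ⟨convex_Ici 0, fun x hx y hy a b ha hb hab => ?_⟩
  simp only [smul_eq_mul]
  have hx' : (0:ℝ) ≤ x := hx
  have hy' : (0:ℝ) ≤ y := hy
  have hmx := hmem x hx'
  have hmy := hmem y hy'
  have hmxy := hmem (a * x + b * y) (add_nonneg (mul_nonneg ha hx') (mul_nonneg hb hy'))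
  have hcomb : a * (1 - 4 * p * (1 - p) * (1 - Real.exp (-(γ * x)))) +
      b * (1 - 4 * p * (1 - p) * (1 - Real.exp (-(γ * y)))) ∈ Set.Icc (0:ℝ) 1 := by
    have := (convex_Icc (0:ℝ) 1) hmx hmy ha hb hab
    simpa using this
  have hconv : 1 - 4 * p * (1 - p) * (1 - Real.exp (-(γ * (a * x + b * y)))) ≤
      a * (1 - 4 * p * (1 - p) * (1 - Real.exp (-(γ * x)))) +
      b * (1 - 4 * p * (1 - p) * (1 - Real.exp (-(γ * y)))) := by
    have hexp := convexOn_exp.2 (Set.mem_univ (-(γ * x))) (Set.mem_univ (-(γ * y))) ha hb hab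
    simp only [smul_eq_mul] at hexp
    have harg : -(γ * (a * x + b * y)) = a * -(γ * x) + b * -(γ * y) := by ring
    rw [harg]
    nlinarith [mul_le_mul_of_nonneg_left hexp hq0]
  have hcc := g_concave.2 hmx hmy ha hb hab
  simp only [smul_eq_mul] at hcc
  calc a * g (1 - 4 * p * (1 - p) * (1 - Real.exp (-(γ * x)))) +
      b * g (1 - 4 * p * (1 - p) * (1 - Real.exp (-(γ * y))))
      ≤ g (a * (1 - 4 * p * (1 - p) * (1 - Real.exp (-(γ * x)))) +
          b * (1 - 4 * p * (1 - p) * (1 - Real.exp (-(γ * y))))) := hcc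
    _ ≤ g (1 - 4 * p * (1 - p) * (1 - Real.exp (-(γ * (a * x + b * y))))) :=
        g_anti hmxy hcomb hconv
end

section
/- Let H₂(x) = −x·log₂ x − (1−x)·log₂(1−x) (with 0·log₂ 0 = 0) denote the binary Shannon entropy. Then for every t ∈ [0,1]: H₂((1+t)/2) ≥ 1 − H₂((1 − √(1−t²))/2). Equivalently, for all κ₀, κ₁ ∈ [0,1] and all n ≥ 0, setting γ = (√κ₀ − √κ₁)², the multi-cell classical reading capacity H₂((1 + e^{−γn/2})/2) is at least the single-cell classical bound 1 − H₂((1 − √(1 − e^{−γn}))/2). -/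
open Real

namespace Stmt7Aux

noncomputable def F (t : ℝ) : ℝ :=
  2 * Real.log 2 * t ^ 2 - ((1 + t) * Real.log (1 + t) + (1 - t) * Real.log (1 - t))

noncomputable def F' (t : ℝ) : ℝ :=
  4 * Real.log 2 * t - Real.log (1 + t) + Real.log (1 - t)

noncomputable def F'' (t : ℝ) : ℝ :=
  4 * Real.log 2 - (1 / (1 + t) + 1 / (1 - t))

lemma contF : Continuous F := by
  have h1 : Continuous fun t : ℝ => (1 + t) * Real.log (1 + t) :=
    Real.continuous_mul_log.comp (continuous_const.add continuous_id)
  have h2 : Continuous fun t : ℝ => (1 - t) * Real.log (1 - t) :=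
    Real.continuous_mul_log.comp (continuous_const.sub continuous_id)
  exact ((continuous_const.mul (continuous_pow 2)).sub (h1.add h2))

lemma hasDerivF {t : ℝ} (h1 : -1 < t) (h2 : t < 1) : HasDerivAt F (F' t) t := by
  have hp1 : (0:ℝ) < 1 + t := by linarith
  have hp2 : (0:ℝ) < 1 - t := by linarith
  have ha : HasDerivAt (fun t : ℝ => 1 + t) 1 t := by
    simpa using (hasDerivAt_id t).const_add (1:ℝ)
  have hb : HasDerivAt (fun t : ℝ => 1 - t) (-1) t := by
    simpa using (hasDerivAt_id t).const_sub (1:ℝ)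
  have hla : HasDerivAt (fun t : ℝ => Real.log (1 + t)) (1 / (1 + t)) t := by
    simpa using ha.log hp1.ne'
  have hlb : HasDerivAt (fun t : ℝ => Real.log (1 - t)) ((-1) / (1 - t)) t := by
    simpa using hb.log hp2.ne'
  have hA := ha.mul hla
  have hB := hb.mul hlb
  have hsq : HasDerivAt (fun t : ℝ => 2 * Real.log 2 * t ^ 2) (2 * Real.log 2 * (2 * t)) t := by
    simpa using (hasDerivAt_pow 2 t).const_mul (2 * Real.log 2)
  have := hsq.sub (hA.add hB)
  refine this.congr_deriv ?_
  unfold F'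
  field_simp
  ring

lemma hasDerivF' {t : ℝ} (h1 : -1 < t) (h2 : t < 1) : HasDerivAt F' (F'' t) t := by
  have hp1 : (0:ℝ) < 1 + t := by linarith
  have hp2 : (0:ℝ) < 1 - t := by linarith
  have ha : HasDerivAt (fun t : ℝ => 1 + t) 1 t := by
    simpa using (hasDerivAt_id t).const_add (1:ℝ)
  have hb : HasDerivAt (fun t : ℝ => 1 - t) (-1) t := by
    simpa using (hasDerivAt_id t).const_sub (1:ℝ)
  have hla : HasDerivAt (fun t : ℝ => Real.log (1 + t)) (1 / (1 + t)) t := by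
    simpa using ha.log hp1.ne'
  have hlb : HasDerivAt (fun t : ℝ => Real.log (1 - t)) ((-1) / (1 - t)) t := by
    simpa using hb.log hp2.ne'
  have hlin : HasDerivAt (fun t : ℝ => 4 * Real.log 2 * t) (4 * Real.log 2) t := by
    simpa using (hasDerivAt_id t).const_mul (4 * Real.log 2)
  have := (hlin.sub hla).add hlb
  refine this.congr_deriv ?_
  unfold F''
  field_simp
  ring

lemma contF' : ContinuousOn F' (Set.Ioo (-1 : ℝ) 1) := by
  intro x hx
  exact ((hasDerivF' hx.1 hx.2).continuousAt).continuousWithinAt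

lemma two_log_two_gt_one : 1 < 2 * Real.log 2 := by
  have := Real.log_two_gt_d9
  linarith

lemma F_nonneg : ∀ t ∈ Set.Icc (0:ℝ) 1, 0 ≤ F t := by
  have h2l := two_log_two_gt_one
  have hlpos : 0 < 2 * Real.log 2 := by linarith
  set c := Real.sqrt (1 - 1 / (2 * Real.log 2)) with hc
  have hc2arg : (0:ℝ) ≤ 1 - 1 / (2 * Real.log 2) := by
    have : 1 / (2 * Real.log 2) < 1 := by
      rw [div_lt_one hlpos]; exact h2l
    linarith
  have hc2 : c ^ 2 = 1 - 1 / (2 * Real.log 2) := Real.sq_sqrt hc2arg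
  have hcpos : 0 ≤ c := Real.sqrt_nonneg _
  have hc1 : c < 1 := by
    rw [hc]
    have harglt : 1 - 1 / (2 * Real.log 2) < 1 := by
      have : 0 < 1 / (2 * Real.log 2) := by positivity
      linarith
    nlinarith [Real.sq_sqrt hc2arg, Real.sqrt_nonneg (1 - 1 / (2 * Real.log 2))]
  -- F'' ≥ 0 on Ioo 0 c, hence F' monotone on Icc 0 c
  have hIcc_sub : Set.Icc (0:ℝ) c ⊆ Set.Ioo (-1:ℝ) 1 := by
    intro x hx; exact ⟨by linarith [hx.1], by linarith [hx.2]⟩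
  have hF'mono : MonotoneOn F' (Set.Icc (0:ℝ) c) := by
    apply monotoneOn_of_hasDerivWithinAt_nonneg (convex_Icc 0 c)
      (contF'.mono hIcc_sub)
      (f' := F'')
    · intro x hx
      rw [interior_Icc] at hx
      exact (hasDerivF' (by linarith [hx.1]) (by linarith [hx.2, hc1])).hasDerivWithinAt
    · intro x hx
      rw [interior_Icc] at hx
      obtain ⟨hx0, hxc⟩ := hx
      have hx1 : x < 1 := lt_trans hxc hc1
      have hp1 : (0:ℝ) < 1 + x := by linarith
      have hp2 : (0:ℝ) < 1 - x := by linarith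
      have hxx : x ^ 2 < c ^ 2 := by nlinarith
      have h1mx : 1 / (2 * Real.log 2) < 1 - x ^ 2 := by
        rw [hc2] at hxx; linarith
      have h1mx0 : 0 < 1 - x ^ 2 := lt_trans (by positivity) h1mx
      have hsum : 1 / (1 + x) + 1 / (1 - x) = 2 / (1 - x ^ 2) := by
        rw [div_add_div _ _ hp1.ne' hp2.ne', show (1+x)*(1-x) = 1 - x^2 by ring]
        norm_num
      unfold F''
      rw [hsum]
      rw [sub_nonneg, div_le_iff₀ h1mx0]
      have : 1 / (2 * Real.log 2) * (4 * Real.log 2) < (1 - x ^ 2) * (4 * Real.log 2) := by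
        apply mul_lt_mul_of_pos_right h1mx; positivity
      have heq : 1 / (2 * Real.log 2) * (4 * Real.log 2) = 2 := by
        field_simp; ring
      linarith
  have hF'0 : F' 0 = 0 := by simp [F']
  have hF'nonneg : ∀ x ∈ Set.Icc (0:ℝ) c, 0 ≤ F' x := by
    intro x hx
    have := hF'mono (Set.left_mem_Icc.2 hcpos) hx hx.1
    rwa [hF'0] at this
  -- F monotone on Icc 0 c
  have hFmono : MonotoneOn F (Set.Icc (0:ℝ) c) := by
    apply monotoneOn_of_hasDerivWithinAt_nonneg (convex_Icc 0 c)
      (contF.continuousOn) (f' := F')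
    · intro x hx
      rw [interior_Icc] at hx
      exact (hasDerivF (by linarith [hx.1]) (by linarith [hx.2, hc1])).hasDerivWithinAt
    · intro x hx
      rw [interior_Icc] at hx
      exact hF'nonneg x ⟨le_of_lt hx.1, le_of_lt hx.2⟩
  have hF0 : F 0 = 0 := by simp [F]
  have hFnonneg1 : ∀ x ∈ Set.Icc (0:ℝ) c, 0 ≤ F x := by
    intro x hx
    have := hFmono (Set.left_mem_Icc.2 hcpos) hx hx.1
    rwa [hF0] at this
  -- F concave on Icc c 1
  have hFconc : ConcaveOn ℝ (Set.Icc c 1) F := by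
    apply concaveOn_of_hasDerivWithinAt2_nonpos (convex_Icc c 1)
      (contF.continuousOn) (f' := F') (f'' := F'')
    · intro x hx
      rw [interior_Icc] at hx
      exact (hasDerivF (by linarith [hx.1, hcpos]) hx.2).hasDerivWithinAt
    · intro x hx
      rw [interior_Icc] at hx
      exact (hasDerivF' (by linarith [hx.1, hcpos]) hx.2).hasDerivWithinAt
    · intro x hx
      rw [interior_Icc] at hx
      obtain ⟨hxc, hx1⟩ := hx
      have hx0 : 0 ≤ x := le_trans hcpos (le_of_lt hxc)
      have hp1 : (0:ℝ) < 1 + x := by linarith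
      have hp2 : (0:ℝ) < 1 - x := by linarith
      have hxx : c ^ 2 < x ^ 2 := by nlinarith
      have h1mx : 1 - x ^ 2 < 1 / (2 * Real.log 2) := by
        rw [hc2] at hxx; linarith
      have h1mx0 : 0 < 1 - x ^ 2 := by nlinarith
      have hsum : 1 / (1 + x) + 1 / (1 - x) = 2 / (1 - x ^ 2) := by
        rw [div_add_div _ _ hp1.ne' hp2.ne', show (1+x)*(1-x) = 1 - x^2 by ring]
        norm_num
      unfold F''
      rw [hsum]
      rw [sub_nonpos, le_div_iff₀ h1mx0]
      have hmul : (1 - x ^ 2) * (4 * Real.log 2) < 1 / (2 * Real.log 2) * (4 * Real.log 2) := by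
        apply mul_lt_mul_of_pos_right h1mx; positivity
      have heq : 1 / (2 * Real.log 2) * (4 * Real.log 2) = 2 := by
        field_simp; ring
      linarith
  have hF1 : F 1 = 0 := by
    simp [F]
    rw [show (1:ℝ) + 1 = 2 by norm_num]
    ring
  have hFnonneg2 : ∀ x ∈ Set.Icc c 1, 0 ≤ F x := by
    intro x hx
    have hseg : x ∈ segment ℝ c 1 := by
      rw [segment_eq_Icc (le_of_lt hc1)]; exact hx
    have := hFconc.ge_on_segment (Set.left_mem_Icc.2 (le_of_lt hc1))
      (Set.right_mem_Icc.2 (le_of_lt hc1)) hseg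
    have hmin : 0 ≤ min (F c) (F 1) := by
      rw [hF1]
      exact le_min (hFnonneg1 c (Set.right_mem_Icc.2 hcpos)) le_rfl
    linarith
  intro t ht
  rcases le_total t c with h | h
  · exact hFnonneg1 t ⟨ht.1, h⟩
  · exact hFnonneg2 t ⟨h, ht.2⟩

/-- Key inequality: `binEnt ((1+t)/2) ≥ 1 - t^2` for `t ∈ [0,1]`. -/
lemma binEnt_ge (t : ℝ) (ht0 : 0 ≤ t) (ht1 : t ≤ 1) : 1 - t ^ 2 ≤ binEnt ((1 + t) / 2) := by
  rcases eq_or_lt_of_le ht1 with rfl | hlt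
  · norm_num [binEnt]
  · have hF := F_nonneg t ⟨ht0, ht1⟩
    have hp1 : (0:ℝ) < 1 + t := by linarith
    have hp2 : (0:ℝ) < 1 - t := by linarith
    have hl2 : Real.log 2 ≠ 0 := by
      have := two_log_two_gt_one; intro h; rw [h] at this; norm_num at this
    have hl2pos : 0 < Real.log 2 := by
      have := two_log_two_gt_one; linarith
    have key : binEnt ((1 + t) / 2) - (1 - t ^ 2) = F t / (2 * Real.log 2) := by
      unfold binEnt F
      rw [show (1:ℝ) - (1 + t) / 2 = (1 - t) / 2 by ring]
      rw [Real.logb, Real.logb, Real.log_div hp1.ne' (by norm_num),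
        Real.log_div hp2.ne' (by norm_num)]
      field_simp
      ring
    have : 0 ≤ F t / (2 * Real.log 2) := by positivity
    linarith [key ▸ this]

lemma binEnt_symm (x : ℝ) : binEnt (1 - x) = binEnt x := by
  unfold binEnt
  rw [show (1:ℝ) - (1 - x) = x by ring]
  ring

lemma main_ineq (t : ℝ) (ht0 : 0 ≤ t) (ht1 : t ≤ 1) :
    binEnt ((1 + t) / 2) ≥ 1 - binEnt ((1 - Real.sqrt (1 - t ^ 2)) / 2) := by
  set s := Real.sqrt (1 - t ^ 2) with hs
  have hargs : (0:ℝ) ≤ 1 - t ^ 2 := by nlinarith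
  have hs2 : s ^ 2 = 1 - t ^ 2 := Real.sq_sqrt hargs
  have hs0 : 0 ≤ s := Real.sqrt_nonneg _
  have hs1 : s ≤ 1 := by nlinarith
  have h1 : 1 - t ^ 2 ≤ binEnt ((1 + t) / 2) := binEnt_ge t ht0 ht1
  have h2 : 1 - s ^ 2 ≤ binEnt ((1 + s) / 2) := binEnt_ge s hs0 hs1
  have hsymm : binEnt ((1 - s) / 2) = binEnt ((1 + s) / 2) := by
    rw [show (1 - s) / 2 = 1 - (1 + s) / 2 by ring, binEnt_symm]
  rw [hsymm]
  nlinarith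

end Stmt7Aux

/-- For every `t ∈ [0,1]`, `H₂((1+t)/2) ≥ 1 − H₂((1 − √(1−t²))/2)`; equivalently,
for pure-loss reflectivities `κ₀, κ₁ ∈ [0,1]` and signal energy `n ≥ 0`, with
`γ = (√κ₀ − √κ₁)²`, the multi-cell classical reading capacity
`H₂((1 + e^{−γn/2})/2)` is at least the single-cell classical bound
`1 − H₂((1 − √(1 − e^{−γn}))/2)`. -/
theorem stmt7 :
    (∀ t : ℝ, 0 ≤ t → t ≤ 1 →
      binEnt ((1 + t) / 2) ≥ 1 - binEnt ((1 - Real.sqrt (1 - t ^ 2)) / 2)) ∧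
    (∀ κ₀ κ₁ : ℝ, 0 ≤ κ₀ → κ₀ ≤ 1 → 0 ≤ κ₁ → κ₁ ≤ 1 → ∀ n : ℝ, 0 ≤ n →
      binEnt ((1 + Real.exp (-((Real.sqrt κ₀ - Real.sqrt κ₁) ^ 2 * n) / 2)) / 2)
        ≥ 1 - binEnt ((1 - Real.sqrt
            (1 - Real.exp (-((Real.sqrt κ₀ - Real.sqrt κ₁) ^ 2 * n)))) / 2)) := by
  constructor
  · exact Stmt7Aux.main_ineq
  · intro κ₀ κ₁ _ _ _ _ n hn
    set γ := (Real.sqrt κ₀ - Real.sqrt κ₁) ^ 2 with hγ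
    have hγ0 : 0 ≤ γ := sq_nonneg _
    set t := Real.exp (-(γ * n) / 2) with ht
    have ht0 : 0 ≤ t := (Real.exp_pos _).le
    have ht1 : t ≤ 1 := Real.exp_le_one_iff.2 (by nlinarith)
    have ht2 : t ^ 2 = Real.exp (-(γ * n)) := by
      rw [ht, sq, ← Real.exp_add]; ring_nf
    have := Stmt7Aux.main_ineq t ht0 ht1
    rwa [ht2] at this
end

section
/- Fix n > 0 and 0 ≤ κ₀ < 1, and set a = 1 − √κ₀ ∈ (0,1]. For real s > 0 define Θ(s) = (1/2)·(1 + n·a/s)^{−2s}, and let H₂ denote the binary Shannon entropy. Then: (i) Θ(s) ∈ (0, 1/2] for all s > 0; (ii) Θ is strictly decreasing on (0, ∞); and consequently (iii) the guaranteed information Q(s) = 1 − H₂(Θ(s)) is strictly increasing in s, so for all integers 1 ≤ s ≤ s′ one has Q(1) ≤ Q(s) ≤ Q(s′). -/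
open Real

lemma binEnt_eq (x : ℝ) : binEnt x = Real.binEntropy x / Real.log 2 := by
  simp [binEnt, Real.binEntropy, Real.logb, Real.log_inv]
  ring

/-- For an ideal binary memory read by the EPR transmitter `ρ_epr(s,s,n)`, the error
bound `Θ(s) = (1/2)(1 + na/s)^{−2s}` (with `a = 1 − √κ₀`) lies in `(0, 1/2]`, is
strictly decreasing in `s`, and hence the guaranteed information
`Q(s) = 1 − H₂(Θ(s))` is strictly increasing in `s`; in particular
`Q(1) ≤ Q(s) ≤ Q(s′)` for integers `1 ≤ s ≤ s′`. -/
theorem stmt8 (n : ℝ) (hn : 0 < n) (κ₀ : ℝ) (h₀ : 0 ≤ κ₀) (h₀' : κ₀ < 1)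
    (a : ℝ) (ha : a = 1 - Real.sqrt κ₀)
    (Θ Q : ℝ → ℝ)
    (hΘ : ∀ s : ℝ, Θ s = (1 / 2) * (1 + n * a / s) ^ (-(2 * s)))
    (hQ : ∀ s : ℝ, Q s = 1 - binEnt (Θ s)) :
    (∀ s : ℝ, 0 < s → 0 < Θ s ∧ Θ s ≤ 1 / 2) ∧
    StrictAntiOn Θ (Set.Ioi (0 : ℝ)) ∧
    StrictMonoOn Q (Set.Ioi (0 : ℝ)) ∧
    (∀ s s' : ℕ, 1 ≤ s → s ≤ s' →
      Q 1 ≤ Q (s : ℝ) ∧ Q (s : ℝ) ≤ Q (s' : ℝ)) := by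
  have hsq : Real.sqrt κ₀ < 1 := by
    have := Real.sqrt_lt_sqrt h₀ h₀'
    simpa using this
  have ha0 : 0 < a := by rw [ha]; linarith
  set c := n * a with hc
  have hc0 : 0 < c := mul_pos hn ha0
  -- g s = s * log (1 + c/s)
  set g : ℝ → ℝ := fun s => s * Real.log (1 + c / s) with hg
  have hbase : ∀ s : ℝ, 0 < s → 0 < 1 + c / s := fun s hs => by positivity
  have hgpos : ∀ s : ℝ, 0 < s → 0 < g s := by
    intro s hs
    have : (1:ℝ) < 1 + c / s := by
      have : 0 < c / s := div_pos hc0 hs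
      linarith
    exact mul_pos hs (Real.log_pos this)
  -- derivative of g
  have hderiv : ∀ s : ℝ, 0 < s →
      HasDerivAt g (Real.log (1 + c / s) + s * ((-c / s ^ 2) / (1 + c / s))) s := by
    intro s hs
    have h1 : HasDerivAt (fun s : ℝ => 1 + c / s) (-c / s ^ 2) s := by
      have h2 := ((hasDerivAt_inv (ne_of_gt hs)).const_mul c).const_add 1
      have he : c * -(s ^ 2)⁻¹ = -c / s ^ 2 := by field_simp
      simpa [div_eq_mul_inv, he] using h2
    have h2 : HasDerivAt (fun s : ℝ => Real.log (1 + c / s)) ((-c / s ^ 2) / (1 + c / s)) s :=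
      h1.log (ne_of_gt (hbase s hs))
    have : HasDerivAt (fun y => id y * Real.log (1 + c / y)) (1 * Real.log (1 + c / s) + id s * ((-c / s ^ 2) / (1 + c / s))) s := (hasDerivAt_id s).mul h2
    convert this using 1
    simp only [id_eq]
    ring
    simp only [id_eq]
    ring
  have hderivpos : ∀ s : ℝ, 0 < s →
      0 < Real.log (1 + c / s) + s * ((-c / s ^ 2) / (1 + c / s)) := by
    intro s hs
    have hb := hbase s hs
    have key : c / (s + c) < Real.log (1 + c / s) := by
      have hy : (0:ℝ) < s / (s + c) := div_pos hs (by linarith)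
      have hne : s / (s + c) ≠ 1 := by
        intro h
        have : s = s + c := by
          field_simp at h; linarith
        linarith
      have := Real.log_lt_sub_one_of_pos hy hne
      have hlog : Real.log (s / (s + c)) = - Real.log ((s + c) / s) := by
        rw [← Real.log_inv]; congr 1; field_simp
      have heq : (s + c) / s = 1 + c / s := by field_simp
      rw [hlog, heq] at this
      have : -(Real.log (1 + c/s)) < s / (s + c) - 1 := this
      have h2 : s / (s + c) - 1 = -(c / (s + c)) := by field_simp; ring
      linarith [h2 ▸ this]
    have heq2 : s * ((-c / s ^ 2) / (1 + c / s)) = -(c / (s + c)) := by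
      field_simp
    rw [heq2]
    linarith
  have hgmono : StrictMonoOn g (Set.Ioi (0:ℝ)) := by
    apply strictMonoOn_of_deriv_pos (convex_Ioi 0)
    · intro s hs
      exact ((hderiv s hs).continuousAt).continuousWithinAt
    · intro s hs
      rw [interior_Ioi] at hs
      rw [(hderiv s hs).deriv]
      exact hderivpos s hs
  -- Θ s = (1/2) * exp (-(2 * g s)) for s > 0
  have hΘ' : ∀ s : ℝ, 0 < s → Θ s = (1/2) * Real.exp (-(2 * g s)) := by
    intro s hs
    rw [hΘ s, Real.rpow_def_of_pos (hbase s hs)]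
    congr 1
    rw [hg]
    ring_nf
  have hΘbound : ∀ s : ℝ, 0 < s → 0 < Θ s ∧ Θ s ≤ 1 / 2 := by
    intro s hs
    rw [hΘ' s hs]
    constructor
    · positivity
    · have : Real.exp (-(2 * g s)) ≤ 1 := by
        apply Real.exp_le_one_iff.mpr
        have := hgpos s hs; linarith
      linarith
  have hΘanti : StrictAntiOn Θ (Set.Ioi (0:ℝ)) := by
    intro s1 h1 s2 h2 h12
    rw [hΘ' s1 h1, hΘ' s2 h2]
    have := hgmono h1 h2 h12
    have := Real.exp_lt_exp.mpr (by linarith : -(2 * g s2) < -(2 * g s1))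
    linarith
  have hQmono : StrictMonoOn Q (Set.Ioi (0:ℝ)) := by
    intro s1 h1 s2 h2 h12
    rw [hQ s1, hQ s2, binEnt_eq, binEnt_eq]
    have hΘ1 := hΘbound s1 (Set.mem_Ioi.mp h1)
    have hΘ2 := hΘbound s2 (Set.mem_Ioi.mp h2)
    have hmem1 : Θ s1 ∈ Set.Icc (0:ℝ) 2⁻¹ := ⟨le_of_lt hΘ1.1, by rw [show (2:ℝ)⁻¹ = 1/2 by norm_num]; exact hΘ1.2⟩
    have hmem2 : Θ s2 ∈ Set.Icc (0:ℝ) 2⁻¹ := ⟨le_of_lt hΘ2.1, by rw [show (2:ℝ)⁻¹ = 1/2 by norm_num]; exact hΘ2.2⟩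
    have hlt : Θ s2 < Θ s1 := hΘanti h1 h2 h12
    have hbe := Real.binEntropy_strictMonoOn hmem2 hmem1 hlt
    have hlog2 : (0:ℝ) < Real.log 2 := Real.log_pos (by norm_num)
    have := (div_lt_div_iff_of_pos_right hlog2).mpr hbe
    linarith
  refine ⟨hΘbound, hΘanti, hQmono, ?_⟩
  intro s s' hs hss'
  have hQm := hQmono.monotoneOn
  have h1 : (1:ℝ) ∈ Set.Ioi (0:ℝ) := by norm_num
  have hsm : (s:ℝ) ∈ Set.Ioi (0:ℝ) := by
    simp [Set.mem_Ioi]; exact_mod_cast lt_of_lt_of_le zero_lt_one hs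
  have hs'm : (s':ℝ) ∈ Set.Ioi (0:ℝ) := by
    simp [Set.mem_Ioi]; exact_mod_cast lt_of_lt_of_le zero_lt_one (hs.trans hss')
  exact ⟨hQm h1 hsm (by exact_mod_cast hs), hQm hsm hs'm (by exact_mod_cast hss')⟩
end
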